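/- Let H, A : ℝ² → ℝ² with H continuous, A a linear isomorphism, and H(u+m, v+n) = H(u,v) + A(m,n) for all (u,v) ∈ ℝ², (m,n) ∈ ℤ². Suppose λ, λ̃ are irrational and H maps lines of slope λ into lines of slope λ̃. Then there exists a continuous function κ : ℝ² → ℝ such that H(u,v) = H(0,0) + A(u,v) + κ(u,v)·(1, λ̃) for all (u,v). -/

import Mathlib

/-- Under the same hypotheses as the dynamical lemma, there is a continuous
`κ : ℝ² → ℝ` with `H w = H 0 + A w + κ w • (1, λ̃)`. -/
theorem stmt1 (H : ℝ × ℝ → ℝ × ℝ) (A : (ℝ × ℝ) ≃ₗ[ℝ] (ℝ × ℝ))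
    (hH : Continuous H)
    (hequiv : ∀ (u v : ℝ) (m n : ℤ), H (u + m, v + n) = H (u, v) + A (m, n))
    (lam lamt : ℝ) (hlam : Irrational lam) (hlamt : Irrational lamt)
    (hmaps : ∀ c : ℝ, ∃ c' : ℝ, ∀ u v : ℝ, v - lam * u = c →
      (H (u, v)).2 - lamt * (H (u, v)).1 = c') :
    ∃ κ : ℝ × ℝ → ℝ, Continuous κ ∧
      ∀ w : ℝ × ℝ, H w = H (0, 0) + A w + κ w • ((1 : ℝ), lamt) := by
  -- `f w = (H w).2 - lamt * (H w).1`
  set f : ℝ × ℝ → ℝ := fun w => (H w).2 - lamt * (H w).1 with hf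
  have hfc : Continuous f := (hH.snd).sub (continuous_const.mul hH.fst)
  -- `f` depends only on `v - lam * u`
  set g : ℝ → ℝ := fun c => f (0, c) with hg
  have hgc : Continuous g := hfc.comp (Continuous.prodMk_right 0)
  have hline : ∀ u v : ℝ, f (u, v) = g (v - lam * u) := by
    intro u v
    obtain ⟨c', hc'⟩ := hmaps (v - lam * u)
    have h1 : f (u, v) = c' := hc' u v rfl
    have h2 : g (v - lam * u) = c' := hc' 0 (v - lam * u) (by ring)
    rw [h1, h2]
  -- linear functional `L`
  set L : ℝ × ℝ → ℝ := fun w => (A w).2 - lamt * (A w).1 with hL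
  set a : ℝ := L (1, 0) with ha
  set b : ℝ := L (0, 1) with hb
  have hLlin : ∀ u v : ℝ, L (u, v) = a * u + b * v := by
    intro u v
    have h : (u, v) = u • ((1 : ℝ), (0 : ℝ)) + v • ((0 : ℝ), (1 : ℝ)) := by
      simp [Prod.ext_iff]
    rw [hL]
    simp only [h, map_add, map_smul]
    simp [ha, hb, hL, Prod.smul_def, smul_eq_mul]
    ring
  -- equivariance of f
  have hfeq : ∀ (u v : ℝ) (m n : ℤ), f (u + m, v + n) = f (u, v) + L (m, n) := by
    intro u v m n
    rw [hf]
    simp only [hequiv u v m n, Prod.snd_add, Prod.fst_add, hL]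
    ring
  -- key identity for g
  have hkey : ∀ (c : ℝ) (m n : ℤ), g (c + ((n : ℝ) - lam * m)) = g c + (a * m + b * n) := by
    intro c m n
    have h1 : f ((0 : ℝ) + (m : ℝ), c + (n : ℝ)) = f (0, c) + L (m, n) := hfeq 0 c m n
    rw [hline, hline] at h1
    rw [hLlin] at h1
    have h2 : c + (n : ℝ) - lam * ((0 : ℝ) + (m : ℝ)) = c + ((n : ℝ) - lam * m) := by ring
    have h3 : c - lam * 0 = c := by ring
    rw [h2, h3] at h1
    exact h1
  -- the subgroup generated by 1 and lam is dense
  have hdense : Dense ((AddSubgroup.closure {(1 : ℝ), lam} : AddSubgroup ℝ) : Set ℝ) := by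
    rcases AddSubgroup.dense_or_cyclic (AddSubgroup.closure {(1 : ℝ), lam}) with h | ⟨x, hx⟩
    · exact h
    · exfalso
      have h1 : (1 : ℝ) ∈ AddSubgroup.closure {(1 : ℝ), lam} :=
        AddSubgroup.subset_closure (by simp)
      have h2 : lam ∈ AddSubgroup.closure {(1 : ℝ), lam} :=
        AddSubgroup.subset_closure (by simp)
      rw [hx, AddSubgroup.mem_closure_singleton] at h1 h2
      obtain ⟨k, hk⟩ := h1
      obtain ⟨l, hl⟩ := h2
      have hk0 : (k : ℝ) ≠ 0 := by
        intro h
        rw [zsmul_eq_mul, h, zero_mul] at hk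
        exact one_ne_zero hk.symm
      apply hlam
      refine ⟨(l : ℚ) / (k : ℚ), ?_⟩
      rw [zsmul_eq_mul] at hk hl
      have hx0 : x = 1 / (k : ℝ) := by field_simp [eq_comm.mp hk]; linear_combination hk
      push_cast
      rw [← hl, hx0]
      field_simp
  -- ψ is additive on the dense subgroup, hence everywhere
  have hP : ∀ t ∈ AddSubgroup.closure {(1 : ℝ), lam},
      ∀ c : ℝ, g (c + t) = g c + (g t - g 0) := by
    intro t ht
    induction ht using AddSubgroup.closure_induction with
    | mem x hx =>
      rcases hx with h | h
      · subst h
        intro c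
        have h1 := hkey c 0 1
        have h2 := hkey 0 0 1
        simp at h1 h2
        rw [h1, h2]; ring
      · subst h
        intro c
        have h1 := hkey c (-1) 0
        have h2 := hkey 0 (-1) 0
        simp at h1 h2
        rw [h1, h2]; ring
    | zero =>
      intro c
      simp
    | add x y hx hy ihx ihy =>
      intro c
      have h1 : g (c + (x + y)) = g ((c + x) + y) := by ring_nf
      rw [h1, ihy (c + x), ihx c]
      have h2 : g (x + y) = g x + (g y - g 0) := by
        have := ihy x
        simpa using this
      rw [h2]; ring
    | neg x hx ihx =>
      intro c
      have h1 : g c = g ((c + -x) + x) := by ring_nf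
      have h2 := ihx (c + -x)
      have h3 : g (-x) = g 0 - (g x - g 0) := by
        have := ihx (-x)
        simp at this
        linarith
      rw [h2] at h1
      rw [h3]
      linarith
  have hadd : ∀ c t : ℝ, g (c + t) = g c + (g t - g 0) := by
    intro c
    have hc1 : Continuous fun t => g (c + t) := hgc.comp (continuous_const.add continuous_id)
    have hc2 : Continuous fun t => g c + (g t - g 0) :=
      continuous_const.add (hgc.sub continuous_const)
    have := Continuous.ext_on hdense hc1 hc2 (fun t ht => hP t ht c)
    intro t
    exact congrFun this t
  -- ψ is a continuous additive map, hence linear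
  set ψ : ℝ → ℝ := fun t => g t - g 0 with hψ
  have hψadd : ∀ s t : ℝ, ψ (s + t) = ψ s + ψ t := by
    intro s t
    simp only [hψ]
    rw [hadd s t]; ring
  have hψc : Continuous ψ := hgc.sub continuous_const
  set Ψ : ℝ →+ ℝ := AddMonoidHom.mk' ψ (fun s t => hψadd s t) with hΨ
  have hψlin : ∀ t : ℝ, ψ t = t * ψ 1 := by
    intro t
    have := (Ψ.toRealLinearMap hψc).map_smul t 1
    have h2 : ⇑(Ψ.toRealLinearMap hψc) = ψ := AddMonoidHom.coe_toRealLinearMap Ψ hψc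
    rw [h2] at this
    simpa using this
  -- identify coefficients
  have hψ1 : ψ 1 = b := by
    have := hkey 0 0 1
    simp at this
    simp [hψ, this]
  have hψlam : ψ lam = -a := by
    have := hkey 0 (-1) 0
    simp at this
    simp [hψ, this]
  have hab : a = -(b * lam) := by
    have := hψlin lam
    rw [hψlam, hψ1] at this
    linarith [this]
  -- conclude: f w - f 0 = L w for all w
  have hmain : ∀ u v : ℝ, f (u, v) = f (0, 0) + L (u, v) := by
    intro u v
    rw [hline u v, hline 0 0, hLlin]
    have h1 : g (v - lam * u) = g 0 + ψ (v - lam * u) := by simp [hψ]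
    rw [h1, hψlin, hψ1, hab]
    have h2 : (0 : ℝ) - lam * 0 = 0 := by ring
    rw [h2]
    ring
  -- define κ
  refine ⟨fun w => (H w).1 - (H (0, 0)).1 - (A w).1, ?_, ?_⟩
  · exact (hH.fst.sub continuous_const).sub
      ((A : (ℝ × ℝ) →ₗ[ℝ] (ℝ × ℝ)).continuous_of_finiteDimensional.fst)
  · intro w
    obtain ⟨u, v⟩ := w
    have h := hmain u v
    rw [hf, hL] at h
    simp only [Prod.ext_iff, Prod.fst_add, Prod.snd_add, Prod.smul_def, smul_eq_mul]
    constructor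
    · ring
    · simp only at h
      nlinarith [h]
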